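/- For arbitrary positive semidefinite operators ρ, σ on a finite-dimensional Hilbert space, one has ((Tr ρ + Tr σ)/2 - ‖ρ-σ‖₁/2)² ≤ F(ρ,σ) ≤ (Tr ρ + Tr σ)²/4 - (1/4)‖ρ-σ‖₁², generalizing the Fuchs–van de Graaf inequalities to non-normalized operators. -/

import Mathlib

open Matrix
open scoped ComplexOrder Classical

/-- The square root of a positive semidefinite matrix, as `Matrix.PosSemidef.sqrt` was defined in Mathlib (Dec 2024). -/
noncomputable def psdSqrt {n : Type*} [Fintype n] [DecidableEq n] {A : Matrix n n ℂ} (hA : A.PosSemidef) :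
    Matrix n n ℂ :=
  hA.1.eigenvectorUnitary.1 * diagonal ((↑) ∘ (√·) ∘ hA.1.eigenvalues) *
  (star hA.1.eigenvectorUnitary : Matrix n n ℂ)

/-- The trace norm `‖X‖₁ = Tr √(XᴴX)` of a complex matrix. -/
noncomputable def traceNorm {n : Type*} [Fintype n] [DecidableEq n] (X : Matrix n n ℂ) : ℝ :=
  ((psdSqrt (Matrix.posSemidef_conjTranspose_mul_self X)).trace).re

/-- The positive semidefinite square root, extended by `0` off the PSD cone. -/
noncomputable def msqrt {n : Type*} [Fintype n] [DecidableEq n] (X : Matrix n n ℂ) : Matrix n n ℂ :=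
  if h : X.PosSemidef then psdSqrt h else 0

/-- The fidelity `F(ρ,σ) = ‖√ρ √σ‖₁²`. -/
noncomputable def fidelity {n : Type*} [Fintype n] [DecidableEq n] (ρ σ : Matrix n n ℂ) : ℝ :=
  (traceNorm (msqrt ρ * msqrt σ)) ^ 2

namespace FvdG

variable {n : Type*} [Fintype n] [DecidableEq n]

open scoped MatrixOrder Matrix.Norms.L2Operator in
lemma psdSqrt_eq_cfc {A : Matrix n n ℂ} (hA : A.PosSemidef) : psdSqrt hA = CFC.sqrt A := by
  rw [CFC.sqrt_eq_cfc, cfc_nnreal_eq_real _ A hA.nonneg, hA.1.cfc_eq]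
  simp only [psdSqrt, IsHermitian.cfc, Unitary.conjStarAlgAut_apply]
  congr 3
  funext i
  simp only [Function.comp_apply]
  rw [Real.sqrt]
  rfl

open scoped MatrixOrder Matrix.Norms.L2Operator in
lemma psdSqrt_psd {A : Matrix n n ℂ} (hA : A.PosSemidef) : (psdSqrt hA).PosSemidef := by
  rw [psdSqrt_eq_cfc]
  exact (CFC.sqrt_nonneg A).posSemidef

open scoped MatrixOrder Matrix.Norms.L2Operator in
lemma psdSqrt_mul_self {A : Matrix n n ℂ} (hA : A.PosSemidef) : psdSqrt hA * psdSqrt hA = A := by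
  rw [psdSqrt_eq_cfc]
  exact CFC.sqrt_mul_sqrt_self A hA.nonneg

open scoped MatrixOrder Matrix.Norms.L2Operator in
lemma eq_psdSqrt_of_sq_eq {A B : Matrix n n ℂ} (hB : B.PosSemidef) (hA : A.PosSemidef)
    (h : B ^ 2 = A) : B = psdSqrt hA := by
  rw [psdSqrt_eq_cfc]
  exact (CFC.sqrt_unique (by rw [← sq]; exact h) hB.nonneg).symm

lemma psd_trace_re_nonneg {M : Matrix n n ℂ} (hM : M.PosSemidef) : 0 ≤ M.trace.re := by
  have ht : M.trace = ∑ i, M i i := rfl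
  rw [ht, Complex.re_sum]
  refine Finset.sum_nonneg fun i _ => ?_
  have := hM.re_dotProduct_nonneg (Pi.single i 1)
  simpa [dotProduct, Matrix.mulVec, Pi.single_apply, Finset.sum_ite_eq,
    dotProduct_single] using this

lemma psd_mul_trace_re_nonneg {M N : Matrix n n ℂ} (hM : M.PosSemidef) (hN : N.PosSemidef) :
    0 ≤ ((M * N).trace).re := by
  have h1 : M = psdSqrt hM * psdSqrt hM := (psdSqrt_mul_self hM).symm
  have h2 : (M * N).trace = (psdSqrt hM * N * (psdSqrt hM)ᴴ).trace := by
    rw [(psdSqrt_psd hM).1]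
    conv_lhs => rw [h1]
    rw [mul_assoc, Matrix.trace_mul_comm]
  rw [h2]
  exact psd_trace_re_nonneg (hN.mul_mul_conjTranspose_same (psdSqrt hM))

section UDU

variable (U : Matrix n n ℂ)

lemma UDU_mul (hU : Uᴴ * U = 1) (d e : n → ℂ) :
    (U * Matrix.diagonal d * Uᴴ) * (U * Matrix.diagonal e * Uᴴ)
      = U * Matrix.diagonal (d * e) * Uᴴ := by
  have : Matrix.diagonal d * (Uᴴ * U) * Matrix.diagonal e = Matrix.diagonal (d * e) := by
    rw [hU, mul_one, Matrix.diagonal_mul_diagonal]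
    rfl
  calc (U * Matrix.diagonal d * Uᴴ) * (U * Matrix.diagonal e * Uᴴ)
      = U * (Matrix.diagonal d * (Uᴴ * U) * Matrix.diagonal e) * Uᴴ := by
        simp only [Matrix.mul_assoc]
    _ = U * Matrix.diagonal (d * e) * Uᴴ := by rw [this]

lemma UDU_trace (hU : Uᴴ * U = 1) (d : n → ℂ) :
    (U * Matrix.diagonal d * Uᴴ).trace = ∑ i, d i := by
  rw [Matrix.trace_mul_cycle, hU, Matrix.one_mul, Matrix.trace_diagonal]

lemma UDU_conjTranspose (d : n → ℂ) :
    (U * Matrix.diagonal d * Uᴴ)ᴴ = U * Matrix.diagonal (fun i => star (d i)) * Uᴴ := by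
  simp [Matrix.conjTranspose_mul, Matrix.diagonal_conjTranspose, Matrix.mul_assoc,
    Pi.star_def]

lemma UDU_posSemidef (d : n → ℝ) (hd : ∀ i, 0 ≤ d i) :
    (U * Matrix.diagonal (fun i => (d i : ℂ)) * Uᴴ).PosSemidef := by
  exact (Matrix.posSemidef_diagonal_iff.mpr fun i => by
    simpa using Complex.zero_le_real.mpr (hd i)).mul_mul_conjTranspose_same U

lemma UDU_sqrt_eq {X : Matrix n n ℂ} (hU : Uᴴ * U = 1) (lam : n → ℝ)
    (hlam : ∀ i, 0 ≤ lam i)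
    (h : Xᴴ * X = U * Matrix.diagonal (fun i => ((lam i : ℂ) ^ 2)) * Uᴴ) :
    psdSqrt (Matrix.posSemidef_conjTranspose_mul_self X)
      = U * Matrix.diagonal (fun i => (lam i : ℂ)) * Uᴴ := by
  refine (eq_psdSqrt_of_sq_eq (UDU_posSemidef U lam hlam) _ ?_).symm
  rw [pow_two, UDU_mul U hU, h]
  congr 1
  ext i
  simp [pow_two]

lemma traceNorm_eq_sum_of {X : Matrix n n ℂ} (hU : Uᴴ * U = 1) (lam : n → ℝ)
    (hlam : ∀ i, 0 ≤ lam i)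
    (h : Xᴴ * X = U * Matrix.diagonal (fun i => ((lam i : ℂ) ^ 2)) * Uᴴ) :
    traceNorm X = ∑ i, lam i := by
  rw [traceNorm, UDU_sqrt_eq U hU lam hlam h, UDU_trace U hU]
  rw [← Complex.ofReal_sum]
  simp

end UDU

lemma traceNorm_psd_eq {ρ : Matrix n n ℂ} (hρ : ρ.PosSemidef) :
    traceNorm ρ = ρ.trace.re := by
  have h : ρ = psdSqrt (Matrix.posSemidef_conjTranspose_mul_self ρ) :=
    eq_psdSqrt_of_sq_eq hρ _ (by rw [pow_two, hρ.1])
  rw [traceNorm, ← h]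


lemma cs_sum {m : Type*} [Fintype m] (x y : m → ℂ) :
    ‖∑ i, (starRingEnd ℂ) (x i) * y i‖
      ≤ Real.sqrt (∑ i, ‖x i‖ ^ 2) * Real.sqrt (∑ i, ‖y i‖ ^ 2) := by
  let x' : EuclideanSpace ℂ m := WithLp.toLp 2 x
  let y' : EuclideanSpace ℂ m := WithLp.toLp 2 y
  have h := norm_inner_le_norm (𝕜 := ℂ) x' y'
  rw [EuclideanSpace.norm_eq, EuclideanSpace.norm_eq] at h
  have hi : (inner ℂ x' y' : ℂ) = ∑ i, (starRingEnd ℂ) (x i) * y i := by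
    rw [PiLp.inner_apply]
    simp only [RCLike.inner_apply]
    exact Finset.sum_congr rfl fun i _ => mul_comm _ _
  rw [hi] at h
  simpa using h

lemma star_mul_self_re (z : ℂ) : (star z * z).re = ‖z‖ ^ 2 := by
  rw [Complex.star_def, ← Complex.normSq_eq_conj_mul_self, Complex.ofReal_re,
    Complex.sq_norm]

lemma col_norm_sq (C : Matrix n n ℂ) (i : n) :
    ∑ j, ‖C j i‖ ^ 2 = ((Cᴴ * C) i i).re := by
  rw [Matrix.mul_apply, Complex.re_sum]
  congr 1
  ext j
  rw [Matrix.conjTranspose_apply, star_mul_self_re]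

lemma row_norm_sq (M : Matrix n n ℂ) (i : n) :
    ∑ j, ‖M i j‖ ^ 2 = ((M * Mᴴ) i i).re := by
  rw [Matrix.mul_apply, Complex.re_sum]
  congr 1
  ext j
  rw [Matrix.conjTranspose_apply]
  rw [show M i j * star (M i j) = star (M i j) * M i j from mul_comm _ _, star_mul_self_re]

lemma abs_trace_mul_unitary_le (X W : Matrix n n ℂ) (hW : W ∈ Matrix.unitaryGroup n ℂ) :
    ‖(X * W).trace‖ ≤ traceNorm X := by
  classical
  have hXX := Matrix.posSemidef_conjTranspose_mul_self X
  have hH : (Xᴴ * X).IsHermitian := hXX.1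
  set U : Matrix n n ℂ := (Matrix.IsHermitian.eigenvectorUnitary hH : Matrix n n ℂ) with hUdef
  have hU1 : Uᴴ * U = 1 := by
    rw [← Matrix.star_eq_conjTranspose]
    exact Matrix.UnitaryGroup.star_mul_self _
  have hU2 : U * Uᴴ = 1 := by
    rw [← Matrix.star_eq_conjTranspose]
    exact Matrix.mem_unitaryGroup_iff.mp (Matrix.IsHermitian.eigenvectorUnitary hH).2
  set lam : n → ℝ := hH.eigenvalues with hlamdef
  have hlam : ∀ i, 0 ≤ lam i := hXX.eigenvalues_nonneg
  have hspec0 : Xᴴ * X = U * Matrix.diagonal (fun i => ((lam i : ℂ))) * Uᴴ := by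
    rw [← Matrix.star_eq_conjTranspose]
    exact hH.spectral_theorem
  have hfun : (fun i => ((Real.sqrt (lam i) : ℂ)) ^ 2) = fun i => ((lam i : ℂ)) := by
    funext i
    rw [← Complex.ofReal_pow, Real.sq_sqrt (hlam i)]
  have hspec : Xᴴ * X = U * Matrix.diagonal (fun i => ((Real.sqrt (lam i) : ℂ)) ^ 2) * Uᴴ := by
    rw [hfun]
    exact hspec0
  have htn : traceNorm X = ∑ i, Real.sqrt (lam i) :=
    traceNorm_eq_sum_of U hU1 _ (fun i => Real.sqrt_nonneg _) hspec
  have hWW : W * Wᴴ = 1 := by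
    rw [← Matrix.star_eq_conjTranspose]
    exact Matrix.mem_unitaryGroup_iff.mp hW
  set C := X * U with hC
  set M := Uᴴ * W with hM
  have htr : (M * C).trace = (X * W).trace := by
    rw [hM, hC, Matrix.trace_mul_comm]
    rw [show X * U * (Uᴴ * W) = X * (U * Uᴴ) * W from by simp only [Matrix.mul_assoc], hU2,
      Matrix.mul_one]
  have hMM : M * Mᴴ = 1 := by
    rw [hM, Matrix.conjTranspose_mul, Matrix.conjTranspose_conjTranspose]
    rw [show Uᴴ * W * (Wᴴ * U) = Uᴴ * (W * Wᴴ) * U from by simp only [Matrix.mul_assoc]]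
    rw [hWW, Matrix.mul_one, hU1]
  have hCC : Cᴴ * C = Matrix.diagonal (fun i => ((lam i : ℂ))) := by
    rw [hC, Matrix.conjTranspose_mul]
    rw [show Uᴴ * Xᴴ * (X * U) = Uᴴ * (Xᴴ * X) * U from by simp only [Matrix.mul_assoc]]
    rw [hspec0]
    rw [show Uᴴ * (U * Matrix.diagonal (fun i => ((lam i : ℂ))) * Uᴴ) * U
        = (Uᴴ * U) * Matrix.diagonal (fun i => ((lam i : ℂ))) * (Uᴴ * U) from by
          simp only [Matrix.mul_assoc]]
    rw [hU1, Matrix.one_mul, Matrix.mul_one]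
  rw [← htr, htn]
  have hexp : (M * C).trace = ∑ i, ∑ j, M i j * C j i := by
    simp [Matrix.trace, Matrix.diag, Matrix.mul_apply]
  rw [hexp]
  refine le_trans (norm_sum_le _ _) ?_
  refine Finset.sum_le_sum fun i _ => ?_
  have hcs := cs_sum (fun j => star (M i j)) (fun j => C j i)
  have h1 : (∑ j, (starRingEnd ℂ) (star (M i j)) * C j i) = ∑ j, M i j * C j i := by
    congr 1; ext j; simp
  have h2 : (∑ j, ‖star (M i j)‖ ^ 2) = ∑ j, ‖M i j‖ ^ 2 := by
    congr 1; ext j; simp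
  rw [h1, h2] at hcs
  refine hcs.trans ?_
  rw [row_norm_sq, col_norm_sq, hMM, hCC]
  simp [Matrix.one_apply_eq, Matrix.diagonal_apply_eq, Real.sqrt_one]

lemma exists_unitary_trace_eq (X : Matrix n n ℂ) :
    ∃ W ∈ Matrix.unitaryGroup n ℂ, (X * W).trace = (traceNorm X : ℂ) := by
  classical
  have hXX := Matrix.posSemidef_conjTranspose_mul_self X
  have hH : (Xᴴ * X).IsHermitian := hXX.1
  set U : Matrix n n ℂ := (Matrix.IsHermitian.eigenvectorUnitary hH : Matrix n n ℂ) with hUdef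
  have hU1 : Uᴴ * U = 1 := by
    rw [← Matrix.star_eq_conjTranspose]
    exact Matrix.UnitaryGroup.star_mul_self _
  have hU2 : U * Uᴴ = 1 := by
    rw [← Matrix.star_eq_conjTranspose]
    exact Matrix.mem_unitaryGroup_iff.mp (Matrix.IsHermitian.eigenvectorUnitary hH).2
  set lam : n → ℝ := hH.eigenvalues with hlamdef
  have hlam : ∀ i, 0 ≤ lam i := hXX.eigenvalues_nonneg
  have hspec0 : Xᴴ * X = U * Matrix.diagonal (fun i => ((lam i : ℂ))) * Uᴴ := by
    rw [← Matrix.star_eq_conjTranspose]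
    exact hH.spectral_theorem
  have hfun : (fun i => ((Real.sqrt (lam i) : ℂ)) ^ 2) = fun i => ((lam i : ℂ)) := by
    funext i
    rw [← Complex.ofReal_pow, Real.sq_sqrt (hlam i)]
  have hspec : Xᴴ * X = U * Matrix.diagonal (fun i => ((Real.sqrt (lam i) : ℂ)) ^ 2) * Uᴴ := by
    rw [hfun]; exact hspec0
  have htn : traceNorm X = ∑ i, Real.sqrt (lam i) :=
    traceNorm_eq_sum_of U hU1 _ (fun i => Real.sqrt_nonneg _) hspec
  set C := X * U with hC
  have hCC : Cᴴ * C = Matrix.diagonal (fun i => ((lam i : ℂ))) := by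
    rw [hC, Matrix.conjTranspose_mul]
    rw [show Uᴴ * Xᴴ * (X * U) = Uᴴ * (Xᴴ * X) * U from by simp only [Matrix.mul_assoc]]
    rw [hspec0]
    rw [show Uᴴ * (U * Matrix.diagonal (fun i => ((lam i : ℂ))) * Uᴴ) * U
        = (Uᴴ * U) * Matrix.diagonal (fun i => ((lam i : ℂ))) * (Uᴴ * U) from by
          simp only [Matrix.mul_assoc]]
    rw [hU1, Matrix.one_mul, Matrix.mul_one]
  set c : n → EuclideanSpace ℂ n := fun j => WithLp.toLp 2 (fun i => C i j) with hc
  have hinner : ∀ j k, (inner ℂ (c j) (c k) : ℂ) = (Cᴴ * C) j k := by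
    intro j k
    rw [Matrix.mul_apply]
    simp [hc, PiLp.inner_apply, RCLike.inner_apply, Matrix.conjTranspose_apply]
    exact Finset.sum_congr rfl fun i _ => mul_comm _ _
  set sS : Set n := {j | lam j ≠ 0} with hsS
  set v : n → EuclideanSpace ℂ n :=
    fun j => ((((Real.sqrt (lam j))⁻¹ : ℝ) : ℂ)) • c j with hv
  have horth : Orthonormal ℂ (sS.restrict v) := by
    rw [orthonormal_iff_ite]
    intro j k
    have : (inner ℂ (v j.1) (v k.1) : ℂ)
        = ((((Real.sqrt (lam j.1))⁻¹ : ℝ) : ℂ)) * ((((Real.sqrt (lam k.1))⁻¹ : ℝ) : ℂ))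
          * (Cᴴ * C) j.1 k.1 := by
      rw [hv]
      simp only [inner_smul_left, inner_smul_right, Complex.conj_ofReal, hinner]
      ring
    show (inner ℂ (v j.1) (v k.1) : ℂ) = _
    rw [this, hCC]
    by_cases hjk : j = k
    · subst hjk
      simp only [Matrix.diagonal_apply_eq, if_pos rfl]
      have hj : lam j.1 ≠ 0 := j.2
      have hr : (Real.sqrt (lam j.1))⁻¹ * (Real.sqrt (lam j.1))⁻¹ * lam j.1 = 1 := by
        rw [← mul_inv, Real.mul_self_sqrt (hlam j.1)]
        exact inv_mul_cancel₀ hj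
      rw [← Complex.ofReal_mul, ← Complex.ofReal_mul, hr, Complex.ofReal_one]
      simp
    · have hjk' : j.1 ≠ k.1 := fun h => hjk (Subtype.ext h)
      rw [Matrix.diagonal_apply_ne _ hjk', if_neg hjk]
      ring
  have hcard : Module.finrank ℂ (EuclideanSpace ℂ n) = Fintype.card n :=
    finrank_euclideanSpace
  obtain ⟨b, hb⟩ := horth.exists_orthonormalBasis_extension_of_card_eq hcard
  set Bm : Matrix n n ℂ := Matrix.of (fun i j => b j i) with hBm
  have hBmU : Bmᴴ * Bm = 1 := by
    ext j k
    rw [Matrix.mul_apply]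
    have := (orthonormal_iff_ite (𝕜 := ℂ)).mp b.orthonormal j k
    rw [PiLp.inner_apply] at this
    simp only [RCLike.inner_apply] at this
    simp only [Matrix.conjTranspose_apply, hBm, Matrix.of_apply, Matrix.one_apply]
    rw [show ∑ i, star (b j i) * b k i = ∑ i, b k i * (starRingEnd ℂ) (b j i) from
      Finset.sum_congr rfl fun i _ => mul_comm _ _, this]
  refine ⟨U * Bmᴴ, ?_, ?_⟩
  · rw [Matrix.mem_unitaryGroup_iff, Matrix.star_eq_conjTranspose, Matrix.conjTranspose_mul,
      Matrix.conjTranspose_conjTranspose]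
    rw [show U * Bmᴴ * (Bm * Uᴴ) = U * (Bmᴴ * Bm) * Uᴴ from by simp only [Matrix.mul_assoc]]
    rw [hBmU, Matrix.mul_one, hU2]
  · have h1 : X * (U * Bmᴴ) = C * Bmᴴ := by rw [hC, Matrix.mul_assoc]
    rw [h1]
    have h2 : (C * Bmᴴ).trace = ∑ j, (inner ℂ (b j) (c j) : ℂ) := by
      have hib : ∀ j, (inner ℂ (b j) (c j) : ℂ) = ∑ i, (starRingEnd ℂ) (b j i) * C i j := by
        intro j
        rw [PiLp.inner_apply]
        simp only [RCLike.inner_apply]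
        exact Finset.sum_congr rfl fun i _ => mul_comm _ _
      simp only [hib, Matrix.trace, Matrix.diag, Matrix.mul_apply, Matrix.conjTranspose_apply,
        hBm, Matrix.of_apply]
      rw [Finset.sum_comm]
      exact Finset.sum_congr rfl fun j _ => Finset.sum_congr rfl fun i _ => mul_comm _ _
    rw [h2, htn]
    rw [show ((↑(∑ i, Real.sqrt (lam i)) : ℂ)) = ∑ i, ((Real.sqrt (lam i) : ℂ)) from by
      push_cast; rfl]
    congr 1
    ext j
    by_cases hj : j ∈ sS
    · rw [hb j hj, hv]
      rw [inner_smul_left, Complex.conj_ofReal, hinner, hCC, Matrix.diagonal_apply_eq]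
      rw [← Complex.ofReal_mul]
      congr 1
      have hj' : lam j ≠ 0 := hj
      have hpos : 0 < lam j := lt_of_le_of_ne (hlam j) (Ne.symm hj')
      rw [inv_mul_eq_iff_eq_mul₀ (by positivity), Real.mul_self_sqrt (hlam j)]
    · have hj0 : lam j = 0 := by simpa [hsS] using hj
      have hcj : (inner ℂ (c j) (c j) : ℂ) = 0 := by
        rw [hinner, hCC, Matrix.diagonal_apply_eq, hj0]
        simp
      have : c j = 0 := by
        rwa [inner_self_eq_zero] at hcj
      rw [this, inner_zero_right, hj0, Real.sqrt_zero, Complex.ofReal_zero]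

lemma herm_decomp {Cm : Matrix n n ℂ} (hC : Cm.IsHermitian) :
    ∃ S P Q : Matrix n n ℂ, S ∈ Matrix.unitaryGroup n ℂ ∧ Sᴴ = S ∧ S * S = 1 ∧
      P.PosSemidef ∧ Q.PosSemidef ∧ Cm = P - Q ∧ S * Cm = P + Q ∧ Cm * S = P + Q ∧
      P * Q = 0 ∧ (S * Cm).trace = (traceNorm Cm : ℂ) := by
  classical
  set U : Matrix n n ℂ := (Matrix.IsHermitian.eigenvectorUnitary hC : Matrix n n ℂ) with hUdef
  have hU1 : Uᴴ * U = 1 := by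
    rw [← Matrix.star_eq_conjTranspose]
    exact Matrix.UnitaryGroup.star_mul_self _
  have hU2 : U * Uᴴ = 1 := by
    rw [← Matrix.star_eq_conjTranspose]
    exact Matrix.mem_unitaryGroup_iff.mp (Matrix.IsHermitian.eigenvectorUnitary hC).2
  set lam : n → ℝ := hC.eigenvalues with hlamdef
  have hspec0 : Cm = U * Matrix.diagonal (fun i => ((lam i : ℂ))) * Uᴴ := by
    rw [← Matrix.star_eq_conjTranspose]
    exact hC.spectral_theorem
  set sgn : n → ℝ := fun i => if 0 ≤ lam i then 1 else -1 with hsgn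
  set lp : n → ℝ := fun i => max (lam i) 0 with hlp
  set lq : n → ℝ := fun i => max (-(lam i)) 0 with hlq
  set S := U * Matrix.diagonal (fun i => ((sgn i : ℂ))) * Uᴴ with hS
  set P := U * Matrix.diagonal (fun i => ((lp i : ℂ))) * Uᴴ with hP
  set Q := U * Matrix.diagonal (fun i => ((lq i : ℂ))) * Uᴴ with hQ
  have hSherm : Sᴴ = S := by
    rw [hS, UDU_conjTranspose]
    congr 1
    congr 1
    ext i
    simp [Complex.star_def, Complex.conj_ofReal]
  have hSS : S * S = 1 := by
    rw [hS, UDU_mul U hU1]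
    have : ((fun i => ((sgn i : ℂ))) * fun i => ((sgn i : ℂ))) = fun _ => (1 : ℂ) := by
      funext i
      simp only [Pi.mul_apply, hsgn]
      split <;> norm_num
    rw [this, Matrix.diagonal_one, Matrix.mul_one, hU2]
  have hSU : S ∈ Matrix.unitaryGroup n ℂ := by
    rw [Matrix.mem_unitaryGroup_iff, Matrix.star_eq_conjTranspose, hSherm, hSS]
  have hPpsd : P.PosSemidef := UDU_posSemidef U lp (fun i => le_max_right _ _)
  have hQpsd : Q.PosSemidef := UDU_posSemidef U lq (fun i => le_max_right _ _)
  have hPQdiff : Cm = P - Q := by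
    rw [hP, hQ, hspec0]
    rw [← Matrix.sub_mul, ← Matrix.mul_sub, Matrix.diagonal_sub]
    have hfe : (fun i => ((lp i : ℂ)) - ((lq i : ℂ))) = fun i => ((lam i : ℂ)) := by
      funext i
      rw [← Complex.ofReal_sub]
      congr 1
      simp only [hlp, hlq]
      rcases le_total 0 (lam i) with h | h
      · rw [max_eq_left h, max_eq_right (by linarith)]
        ring
      · rw [max_eq_right h, max_eq_left (by linarith)]
        ring
    rw [hfe]
  have habs : ∀ i, sgn i * lam i = lp i + lq i := by
    intro i
    simp only [hsgn, hlp, hlq]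
    rcases le_total 0 (lam i) with h | h
    · rw [if_pos h, max_eq_left h, max_eq_right (by linarith)]
      ring
    · rw [max_eq_right h, max_eq_left (by linarith)]
      by_cases h0 : 0 ≤ lam i
      · have : lam i = 0 := le_antisymm h h0
        rw [if_pos h0, this]
        ring
      · rw [if_neg h0]
        ring
  have hPQsum : P + Q = U * Matrix.diagonal (fun i => ((sgn i * lam i : ℝ) : ℂ)) * Uᴴ := by
    rw [hP, hQ, ← Matrix.add_mul, ← Matrix.mul_add, Matrix.diagonal_add]
    have hfe : (fun i => ((lp i : ℂ)) + ((lq i : ℂ))) = fun i => ((sgn i * lam i : ℝ) : ℂ) := by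
      funext i
      rw [← Complex.ofReal_add, habs i]
    rw [hfe]
  have hSC : S * Cm = P + Q := by
    rw [hS, hspec0, UDU_mul U hU1, hPQsum]
    have hfe : ((fun i => ((sgn i : ℂ))) * fun i => ((lam i : ℂ)))
        = fun i => ((sgn i * lam i : ℝ) : ℂ) := by
      funext i
      rw [Pi.mul_apply, ← Complex.ofReal_mul]
    rw [hfe]
  have hCS : Cm * S = P + Q := by
    rw [hS, hspec0, UDU_mul U hU1, hPQsum]
    have hfe : ((fun i => ((lam i : ℂ))) * fun i => ((sgn i : ℂ)))
        = fun i => ((sgn i * lam i : ℝ) : ℂ) := by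
      funext i
      rw [Pi.mul_apply, ← Complex.ofReal_mul, mul_comm (lam i) (sgn i)]
    rw [hfe]
  have hPQzero : P * Q = 0 := by
    rw [hP, hQ, UDU_mul U hU1]
    have : ((fun i => ((lp i : ℂ))) * fun i => ((lq i : ℂ))) = fun _ => (0 : ℂ) := by
      funext i
      simp only [Pi.mul_apply, hlp, hlq]
      rcases le_total 0 (lam i) with h | h
      · rw [max_eq_right (a := -(lam i)) (by linarith)]
        simp
      · rw [max_eq_right (a := lam i) h]
        simp
    rw [this]
    rw [show Matrix.diagonal (fun _ : n => (0 : ℂ)) = 0 from Matrix.diagonal_zero]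
    rw [Matrix.mul_zero, Matrix.zero_mul]
  have htnC : traceNorm Cm = ∑ i, |lam i| := by
    refine traceNorm_eq_sum_of U hU1 (fun i => |lam i|) (fun i => abs_nonneg _) ?_
    have h1 : Cmᴴ * Cm = U * Matrix.diagonal ((fun i => ((lam i : ℂ))) * fun i => ((lam i : ℂ)))
        * Uᴴ := by
      rw [hC.eq]
      conv_lhs => rw [hspec0]
      exact UDU_mul U hU1 _ _
    rw [h1]
    have hfe : ((fun i => ((lam i : ℂ))) * fun i => ((lam i : ℂ)))
        = fun i => ((|lam i| : ℝ) : ℂ) ^ 2 := by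
      funext i
      rw [Pi.mul_apply, ← Complex.ofReal_mul, ← Complex.ofReal_pow]
      congr 1
      rw [← abs_mul_abs_self (lam i)]
      ring
    rw [hfe]
  have htr : (S * Cm).trace = (traceNorm Cm : ℂ) := by
    rw [hSC, hPQsum, UDU_trace U hU1, htnC]
    rw [show ((↑(∑ i, |lam i|) : ℂ)) = ∑ i, ((|lam i| : ℝ) : ℂ) from by push_cast; rfl]
    congr 1
    ext i
    congr 1
    rw [habs i]
    simp only [hlp, hlq]
    rcases le_total 0 (lam i) with h | h
    · rw [abs_of_nonneg h, max_eq_left h, max_eq_right (by linarith)]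
      ring
    · rw [abs_of_nonpos h, max_eq_right h, max_eq_left (by linarith)]
      ring
  exact ⟨S, P, Q, hSU, hSherm, hSS, hPpsd, hQpsd, hPQdiff, hSC, hCS, hPQzero, htr⟩

lemma traceNorm_nonneg (X : Matrix n n ℂ) : 0 ≤ traceNorm X :=
  psd_trace_re_nonneg (psdSqrt_psd (Matrix.posSemidef_conjTranspose_mul_self X))

lemma abs_trace_le (X : Matrix n n ℂ) : ‖X.trace‖ ≤ traceNorm X := by
  have h := abs_trace_mul_unitary_le X 1 (one_mem _)
  rwa [Matrix.mul_one] at h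

lemma cs_trace (M N : Matrix n n ℂ) :
    ‖(Mᴴ * N).trace‖
      ≤ Real.sqrt (((Mᴴ * M).trace).re) * Real.sqrt (((Nᴴ * N).trace).re) := by
  classical
  have h := cs_sum (m := n × n) (fun p => M p.1 p.2) (fun p => N p.1 p.2)
  have e1 : (∑ p : n × n, (starRingEnd ℂ) (M p.1 p.2) * N p.1 p.2) = (Mᴴ * N).trace := by
    rw [Fintype.sum_prod_type]
    rw [show (Mᴴ * N).trace = ∑ j, ∑ i, (starRingEnd ℂ) (M i j) * N i j from by
      simp [Matrix.trace, Matrix.diag, Matrix.mul_apply, Matrix.conjTranspose_apply]]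
    exact Finset.sum_comm
  have e2 : (∑ p : n × n, ‖M p.1 p.2‖ ^ 2) = ((Mᴴ * M).trace).re := by
    rw [Fintype.sum_prod_type]
    rw [show ((Mᴴ * M).trace).re = ∑ j, ((Mᴴ * M) j j).re from by
      simp [Matrix.trace, Matrix.diag, Complex.re_sum]]
    rw [Finset.sum_comm]
    exact Finset.sum_congr rfl fun j _ => col_norm_sq M j
  have e3 : (∑ p : n × n, ‖N p.1 p.2‖ ^ 2) = ((Nᴴ * N).trace).re := by
    rw [Fintype.sum_prod_type]
    rw [show ((Nᴴ * N).trace).re = ∑ j, ((Nᴴ * N) j j).re from by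
      simp [Matrix.trace, Matrix.diag, Complex.re_sum]]
    rw [Finset.sum_comm]
    exact Finset.sum_congr rfl fun j _ => col_norm_sq N j
  rwa [e1, e2, e3] at h

lemma pm_add (S u v : Matrix n n ℂ) (hSh : Sᴴ = S) (hSS : S * S = 1) :
    (u + S * u)ᴴ * (v + S * v) + (u - S * u)ᴴ * (v - S * v) = (4 : ℂ) • (uᴴ * v) := by
  have hSSw : ∀ w : Matrix n n ℂ, S * (S * w) = w := fun w => by
    rw [← Matrix.mul_assoc, hSS, Matrix.one_mul]
  simp only [Matrix.conjTranspose_add, Matrix.conjTranspose_sub, Matrix.conjTranspose_mul, hSh,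
    Matrix.add_mul, Matrix.mul_add, Matrix.sub_mul, Matrix.mul_sub, Matrix.mul_assoc, hSSw]
  module

lemma pm_sub (S u v : Matrix n n ℂ) (hSh : Sᴴ = S) (hSS : S * S = 1) :
    (u + S * u)ᴴ * (v + S * v) - (u - S * u)ᴴ * (v - S * v) = (4 : ℂ) • (uᴴ * (S * v)) := by
  have hSSw : ∀ w : Matrix n n ℂ, S * (S * w) = w := fun w => by
    rw [← Matrix.mul_assoc, hSS, Matrix.one_mul]
  simp only [Matrix.conjTranspose_add, Matrix.conjTranspose_sub, Matrix.conjTranspose_mul, hSh,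
    Matrix.add_mul, Matrix.mul_add, Matrix.sub_mul, Matrix.mul_sub, Matrix.mul_assoc, hSSw]
  module

lemma scalar_upper (a b c d f T : ℝ) (ha : 0 ≤ a) (hb : 0 ≤ b) (hc : 0 ≤ c) (hd : 0 ≤ d)
    (hf0 : 0 ≤ f) (hT : T = a + d - b - c)
    (hf : f ≤ Real.sqrt a * Real.sqrt c + Real.sqrt b * Real.sqrt d) :
    T ^ 2 + 4 * f ^ 2 ≤ (a + b + c + d) ^ 2 := by
  have hf2 : f ^ 2 ≤ (Real.sqrt a * Real.sqrt c + Real.sqrt b * Real.sqrt d) ^ 2 :=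
    pow_le_pow_left₀ hf0 hf 2
  have h1 : Real.sqrt a ^ 2 = a := Real.sq_sqrt ha
  have h2 : Real.sqrt b ^ 2 = b := Real.sq_sqrt hb
  have h3 : Real.sqrt c ^ 2 = c := Real.sq_sqrt hc
  have h4 : Real.sqrt d ^ 2 = d := Real.sq_sqrt hd
  have h5 := sq_nonneg (Real.sqrt a * Real.sqrt b - Real.sqrt c * Real.sqrt d)
  subst hT
  nlinarith [mul_nonneg ha hb, mul_nonneg hc hd, mul_nonneg ha hd, mul_nonneg hb hc,
    mul_nonneg ha hc, mul_nonneg hb hd]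

end FvdG

open FvdG in
/-- Generalized Fuchs–van de Graaf inequalities for arbitrary positive semidefinite operators. -/
theorem fuchs_van_de_graaf_generalized {n : Type*} [Fintype n] [DecidableEq n]
    (ρ σ : Matrix n n ℂ) (hρ : ρ.PosSemidef) (hσ : σ.PosSemidef) :
    ((ρ.trace.re + σ.trace.re) / 2 - traceNorm (ρ - σ) / 2) ^ 2 ≤ fidelity ρ σ ∧
      fidelity ρ σ ≤ (ρ.trace.re + σ.trace.re) ^ 2 / 4 - (1 / 4) * traceNorm (ρ - σ) ^ 2 := by
  classical
  set A := psdSqrt hρ with hA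
  set B := psdSqrt hσ with hB
  have hApsd := psdSqrt_psd hρ
  have hBpsd := psdSqrt_psd hσ
  have hAh : Aᴴ = A := hApsd.1
  have hBh : Bᴴ = B := hBpsd.1
  have hAA : A * A = ρ := psdSqrt_mul_self hρ
  have hBB : B * B = σ := psdSqrt_mul_self hσ
  set f := traceNorm (A * B) with hfdef
  have hf0 : 0 ≤ f := traceNorm_nonneg _
  have hfid : fidelity ρ σ = f ^ 2 := by
    rw [fidelity, msqrt, msqrt, dif_pos hρ, dif_pos hσ]
  set T := traceNorm (ρ - σ) with hTdef
  have hCherm : (ρ - σ).IsHermitian := hρ.1.sub hσ.1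
  obtain ⟨S, P, Q, hSU, hSh, hSS, hPp, hQp, hdiff, hSC, hCS, hPQ, htrS⟩ := herm_decomp hCherm
  have htρ : traceNorm ρ = ρ.trace.re := traceNorm_psd_eq hρ
  have htσ : traceNorm σ = σ.trace.re := traceNorm_psd_eq hσ
  have hTre : T = ((S * ρ).trace).re - ((S * σ).trace).re := by
    have h1 : (S * (ρ - σ)).trace = (S * ρ).trace - (S * σ).trace := by
      rw [Matrix.mul_sub, Matrix.trace_sub]
    rw [h1] at htrS
    have h2 := congrArg Complex.re htrS
    simpa [Complex.sub_re] using h2.symm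
  have hSρ_le : ((S * ρ).trace).re ≤ ρ.trace.re := by
    have h1 : ‖(ρ * S).trace‖ ≤ traceNorm ρ := abs_trace_mul_unitary_le ρ S hSU
    rw [Matrix.trace_mul_comm] at h1
    exact le_trans (Complex.re_le_norm _) (le_of_le_of_eq h1 htρ)
  have hSσ_ge : -(σ.trace.re) ≤ ((S * σ).trace).re := by
    have h1 : ‖(σ * S).trace‖ ≤ traceNorm σ := abs_trace_mul_unitary_le σ S hSU
    rw [Matrix.trace_mul_comm] at h1
    have h2 : |((S * σ).trace).re| ≤ σ.trace.re :=
      le_trans (Complex.abs_re_le_norm _) (le_of_le_of_eq h1 htσ)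
    linarith [(abs_le.mp h2).1]
  have hTle : T ≤ ρ.trace.re + σ.trace.re := by rw [hTre]; linarith
  -- Powers–Størmer step
  set D := A - B with hD
  have hDherm : D.IsHermitian := hApsd.1.sub hBpsd.1
  obtain ⟨S', P', Q', hSU', hSh', hSS', hPp', hQp', hdiff', hSC', hCS', hPQ', -⟩ :=
    herm_decomp hDherm
  have hPh' : P'ᴴ = P' := hPp'.1
  have hQh' : Q'ᴴ = Q' := hQp'.1
  have hQP' : Q' * P' = 0 := by
    have h := congrArg Matrix.conjTranspose hPQ'
    rwa [Matrix.conjTranspose_mul, hPh', hQh', Matrix.conjTranspose_zero] at h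
  have hDid : D * (A + B) + (A + B) * D = (A * A - B * B) + (A * A - B * B) := by
    rw [hD]; noncomm_ring
  have hρσAB : ρ - σ = A * A - B * B := by rw [hAA, hBB]
  have h5 : ((ρ - σ) * S').trace + ((ρ - σ) * S').trace
      = ((A + B) * (P' + Q')).trace + ((A + B) * (P' + Q')).trace := by
    have e1 : ((ρ - σ) * S').trace + ((ρ - σ) * S').trace
        = ((D * (A + B) + (A + B) * D) * S').trace := by
      rw [hDid, Matrix.add_mul, Matrix.trace_add, hρσAB]
    have e2 : ((D * (A + B) + (A + B) * D) * S').trace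
        = ((A + B) * (P' + Q')).trace + ((A + B) * (P' + Q')).trace := by
      rw [Matrix.add_mul, Matrix.trace_add]
      congr 1
      · rw [Matrix.trace_mul_cycle, hSC', Matrix.trace_mul_comm]
      · rw [Matrix.mul_assoc, hCS']
    rw [e1, e2]
  have hexp : ((A + B) * (P' + Q')).trace
      = (A * P').trace + (A * Q').trace + (B * P').trace + (B * Q').trace := by
    rw [Matrix.add_mul, Matrix.mul_add, Matrix.mul_add, Matrix.trace_add, Matrix.trace_add,
      Matrix.trace_add]
    ring
  have hAP : (A * P').trace = (P' * P').trace + (B * P').trace := by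
    have h1 : A * P' = D * P' + B * P' := by rw [hD]; noncomm_ring
    have h2 : D * P' = P' * P' := by rw [hdiff', Matrix.sub_mul, hQP', sub_zero]
    rw [h1, Matrix.trace_add, h2]
  have hBQ : (B * Q').trace = (A * Q').trace + (Q' * Q').trace := by
    have h1 : B * Q' = A * Q' - D * Q' := by rw [hD]; noncomm_ring
    have h2 : D * Q' = -(Q' * Q') := by rw [hdiff', Matrix.sub_mul, hPQ', zero_sub]
    rw [h1, Matrix.trace_sub, h2, Matrix.trace_neg]
    ring
  have hDD : (D * D).trace = (P' * P').trace + (Q' * Q').trace := by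
    have h1 : D * D = P' * P' - P' * Q' - Q' * P' + Q' * Q' := by rw [hdiff']; noncomm_ring
    rw [h1, hPQ', hQP']
    rw [Matrix.trace_add, Matrix.trace_sub, Matrix.trace_sub]
    simp
  have hBP0 : 0 ≤ ((B * P').trace).re := psd_mul_trace_re_nonneg hBpsd hPp'
  have hAQ0 : 0 ≤ ((A * Q').trace).re := psd_mul_trace_re_nonneg hApsd hQp'
  have hkey : ((D * D).trace).re ≤ (((ρ - σ) * S').trace).re := by
    have h5re := congrArg Complex.re h5
    rw [hexp] at h5re
    simp only [Complex.add_re] at h5re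
    have e4 := congrArg Complex.re hAP
    have e5 := congrArg Complex.re hBQ
    have e6 := congrArg Complex.re hDD
    simp only [Complex.add_re] at e4 e5 e6
    linarith
  have habsS' : ‖((ρ - σ) * S').trace‖ ≤ T := abs_trace_mul_unitary_le _ _ hSU'
  have hPS : ((D * D).trace).re ≤ T :=
    le_trans hkey (le_trans (Complex.re_le_norm _) habsS')
  have hDDtr : ((D * D).trace).re = ρ.trace.re + σ.trace.re - 2 * ((A * B).trace).re := by
    have h1 : D * D = A * A - A * B - B * A + B * B := by rw [hD]; noncomm_ring
    rw [h1, Matrix.trace_add, Matrix.trace_sub, Matrix.trace_sub, hAA, hBB,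
      Matrix.trace_mul_comm B A]
    simp only [Complex.add_re, Complex.sub_re]
    ring
  have hABre : ((A * B).trace).re ≤ f := le_trans (Complex.re_le_norm _) (abs_trace_le _)
  have hlow : ρ.trace.re + σ.trace.re - 2 * f ≤ T := by linarith
  constructor
  · rw [hfid]
    have h1 : 0 ≤ (ρ.trace.re + σ.trace.re) / 2 - T / 2 := by linarith
    have h2 : (ρ.trace.re + σ.trace.re) / 2 - T / 2 ≤ f := by linarith
    exact pow_le_pow_left₀ h1 h2 2
  · -- upper bound
    obtain ⟨W, hWU, hWtr⟩ := exists_unitary_trace_eq (A * B)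
    have hWW : W * Wᴴ = 1 := by
      rw [← Matrix.star_eq_conjTranspose]
      exact Matrix.mem_unitaryGroup_iff.mp hWU
    set v := B * W with hv
    set ta := (((A + S * A)ᴴ * (A + S * A)).trace).re with htadef
    set tb := (((A - S * A)ᴴ * (A - S * A)).trace).re with htbdef
    set tc := (((v + S * v)ᴴ * (v + S * v)).trace).re with htcdef
    set td := (((v - S * v)ᴴ * (v - S * v)).trace).re with htddef
    have hta0 : 0 ≤ ta := psd_trace_re_nonneg (Matrix.posSemidef_conjTranspose_mul_self _)
    have htb0 : 0 ≤ tb := psd_trace_re_nonneg (Matrix.posSemidef_conjTranspose_mul_self _)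
    have htc0 : 0 ≤ tc := psd_trace_re_nonneg (Matrix.posSemidef_conjTranspose_mul_self _)
    have htd0 : 0 ≤ td := psd_trace_re_nonneg (Matrix.posSemidef_conjTranspose_mul_self _)
    have hre4 : ∀ z : ℂ, (((4 : ℂ) • z).re) = 4 * z.re := by
      intro z
      simp [Complex.smul_re]
    have hR1 : ta + tb = 4 * ρ.trace.re := by
      have h := congrArg (fun M => (Matrix.trace M).re) (pm_add S A A hSh hSS)
      simp only [Matrix.trace_add, Complex.add_re, Matrix.trace_smul] at h
      rw [hAh, hAA] at h
      rw [htadef, htbdef]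
      rw [h, hre4]
    have hR2 : ta - tb = 4 * ((S * ρ).trace).re := by
      have h := congrArg (fun M => (Matrix.trace M).re) (pm_sub S A A hSh hSS)
      simp only [Matrix.trace_sub, Complex.sub_re, Matrix.trace_smul] at h
      rw [hAh] at h
      have h2 : (A * (S * A)).trace = (S * ρ).trace := by
        rw [Matrix.trace_mul_comm, Matrix.mul_assoc, hAA]
      rw [h2] at h
      rw [htadef, htbdef, h, hre4]
    have hvv : (vᴴ * v).trace = σ.trace := by
      rw [hv, Matrix.conjTranspose_mul, hBh, Matrix.trace_mul_comm]
      rw [show B * W * (Wᴴ * B) = B * (W * Wᴴ) * B from by simp only [Matrix.mul_assoc]]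
      rw [hWW, Matrix.mul_one, hBB]
    have hvSv : (vᴴ * (S * v)).trace = (S * σ).trace := by
      rw [hv, Matrix.conjTranspose_mul, hBh, Matrix.trace_mul_comm]
      rw [show S * (B * W) * (Wᴴ * B) = S * (B * (W * Wᴴ) * B) from by
        simp only [Matrix.mul_assoc]]
      rw [hWW, Matrix.mul_one, hBB]
    have hR3 : tc + td = 4 * σ.trace.re := by
      have h := congrArg (fun M => (Matrix.trace M).re) (pm_add S v v hSh hSS)
      simp only [Matrix.trace_add, Complex.add_re, Matrix.trace_smul] at h
      rw [hvv] at h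
      rw [htcdef, htddef, h, hre4]
    have hR4 : tc - td = 4 * ((S * σ).trace).re := by
      have h := congrArg (fun M => (Matrix.trace M).re) (pm_sub S v v hSh hSS)
      simp only [Matrix.trace_sub, Complex.sub_re, Matrix.trace_smul] at h
      rw [hvSv] at h
      rw [htcdef, htddef, h, hre4]
    have hABf : (Aᴴ * v).trace = (f : ℂ) := by
      rw [hv, hAh, ← Matrix.mul_assoc]
      exact hWtr
    have hcs1 := cs_trace (A + S * A) (v + S * v)
    have hcs2 := cs_trace (A - S * A) (v - S * v)
    have hquarter : (4 : ℂ) • ((Aᴴ * v).trace)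
        = ((A + S * A)ᴴ * (v + S * v)).trace + ((A - S * A)ᴴ * (v - S * v)).trace := by
      rw [← Matrix.trace_add, ← Matrix.trace_smul, pm_add S A v hSh hSS]
    have hest : 4 * f ≤ Real.sqrt ta * Real.sqrt tc + Real.sqrt tb * Real.sqrt td := by
      have h1 : ‖(4 : ℂ) • ((Aᴴ * v).trace)‖ = 4 * f := by
        rw [hABf]
        simp [abs_of_nonneg hf0]
      rw [hquarter] at h1
      calc 4 * f = ‖((A + S * A)ᴴ * (v + S * v)).trace
            + ((A - S * A)ᴴ * (v - S * v)).trace‖ := h1.symm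
        _ ≤ ‖((A + S * A)ᴴ * (v + S * v)).trace‖
            + ‖((A - S * A)ᴴ * (v - S * v)).trace‖ := norm_add_le _ _
        _ ≤ Real.sqrt ta * Real.sqrt tc + Real.sqrt tb * Real.sqrt td := by
            exact add_le_add hcs1 hcs2
    have hsq4 : ∀ x : ℝ, 0 ≤ x → Real.sqrt (x / 4) = Real.sqrt x / 2 := by
      intro x hx
      rw [show x / 4 = x / 2 ^ 2 from by ring, Real.sqrt_div hx, Real.sqrt_sq (by norm_num)]
    have hfquarter : f ≤ Real.sqrt (ta / 4) * Real.sqrt (tc / 4)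
        + Real.sqrt (tb / 4) * Real.sqrt (td / 4) := by
      rw [hsq4 ta hta0, hsq4 tb htb0, hsq4 tc htc0, hsq4 td htd0]
      have : Real.sqrt ta / 2 * (Real.sqrt tc / 2) + Real.sqrt tb / 2 * (Real.sqrt td / 2)
          = (Real.sqrt ta * Real.sqrt tc + Real.sqrt tb * Real.sqrt td) / 4 := by ring
      rw [this]
      linarith
    have hTsplit : T = ta / 4 + td / 4 - tb / 4 - tc / 4 := by
      rw [hTre]
      have h2 : ((S * ρ).trace).re = (ta - tb) / 4 := by linarith
      have h4 : ((S * σ).trace).re = (tc - td) / 4 := by linarith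
      rw [h2, h4]
      ring
    have hmain := scalar_upper (ta / 4) (tb / 4) (tc / 4) (td / 4) f T
      (by linarith) (by linarith) (by linarith) (by linarith) hf0 hTsplit hfquarter
    have hsum : ta / 4 + tb / 4 + tc / 4 + td / 4 = ρ.trace.re + σ.trace.re := by linarith
    rw [hsum] at hmain
    rw [hfid]
    linarith [hmain]
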